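/- Let n and d be positive integers, let B = (B_1,…,B_d) be a vector of positive integers with B_q dividing n for each q, let a ∈ (ZMod n)^d, and let x : (ZMod n)^d → ℂ with N = n^d and |B| = ∏_q B_q. Define Z : ∏_q ZMod B_q → ℂ by Z(t) = (N/|B|)·x(ℓ(t) + a), where ℓ(t) ∈ (ZMod n)^d has q-th coordinate rep(t_q)·(n/B_q) with rep(t_q) ∈ {0,…,B_q−1} the standard representative. Then for every b ∈ ∏_q ZMod B_q, the discrete Fourier transform of Z on ∏_q ZMod B_q satisfies Ẑ(b) = ∑_{f ∈ (ZMod n)^d, f mod B = b} x̂(f)·e^{2πi·(f·a)/n}, i.e., Ẑ(b) = U_x^a(B,b). -/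

import Mathlib

open scoped BigOperators

/-- The `d`-dimensional discrete Fourier transform on `(ZMod n)^d`. -/
noncomputable def dft (n d : ℕ) [NeZero n] (x : (Fin d → ZMod n) → ℂ) :
    (Fin d → ZMod n) → ℂ :=
  fun f => ∑ t : Fin d → ZMod n, x t *
    Complex.exp (-(2 * (Real.pi : ℂ) * Complex.I) *
      (((∑ q, f q * t q : ZMod n)).val : ℂ) / (n : ℂ))

/-- The discrete Fourier transform on `∏_q ZMod (B q)`:
`Ẑ(b) = ∑_t Z(t) · e^{-2πi·∑_q rep(b_q)·rep(t_q)/B_q}`. -/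
noncomputable def dftB (d : ℕ) (B : Fin d → ℕ) [∀ q, NeZero (B q)]
    (Z : (∀ q, ZMod (B q)) → ℂ) : (∀ q, ZMod (B q)) → ℂ :=
  fun b => ∑ t : ∀ q, ZMod (B q), Z t *
    Complex.exp (-(2 * (Real.pi : ℂ) * Complex.I) *
      (∑ q, ((b q).val : ℂ) * ((t q).val : ℂ) / ((B q : ℕ) : ℂ)))

/-- The bucketing of `x` with shift `a`:
`U_x^a(B, b) = ∑_{f mod B = b} x̂(f) · e^{2πi·(f·a)/n}`. -/
noncomputable def bucket (n d : ℕ) [NeZero n] (B : Fin d → ℕ) (hB : ∀ q, B q ∣ n)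
    (x : (Fin d → ZMod n) → ℂ) (a : Fin d → ZMod n) (b : ∀ q, ZMod (B q)) : ℂ :=
  ∑ f ∈ Finset.univ.filter (fun f : Fin d → ZMod n =>
      ∀ q, ZMod.castHom (hB q) (ZMod (B q)) (f q) = b q),
    dft n d x f *
      Complex.exp ((2 * (Real.pi : ℂ) * Complex.I) *
        (((∑ q, f q * a q : ZMod n)).val : ℂ) / (n : ℂ))


noncomputable def cE (n : ℕ) (m : ℤ) : ℂ := Complex.exp (2 * Real.pi * Complex.I * m / n)

lemma cE_add (n : ℕ) (m₁ m₂ : ℤ) : cE n (m₁ + m₂) = cE n m₁ * cE n m₂ := by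
  unfold cE
  rw [← Complex.exp_add]
  congr 1
  push_cast
  ring

lemma cE_nmul (n : ℕ) [NeZero n] (k : ℤ) : cE n (n * k) = 1 := by
  unfold cE
  have hn : (n : ℂ) ≠ 0 := Nat.cast_ne_zero.mpr (NeZero.ne n)
  have h : (2 : ℂ) * Real.pi * Complex.I * (((n : ℤ) * k : ℤ) : ℂ) / n
      = (k : ℤ) * (2 * Real.pi * Complex.I) := by
    push_cast
    field_simp
  rw [h, Complex.exp_int_mul_two_pi_mul_I]

lemma cE_mod (n : ℕ) [NeZero n] {m₁ m₂ : ℤ} (h : ((m₁ : ZMod n)) = (m₂ : ZMod n)) :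
    cE n m₁ = cE n m₂ := by
  have hd : (n : ℤ) ∣ m₁ - m₂ := by
    rwa [← ZMod.intCast_zmod_eq_zero_iff_dvd, Int.cast_sub, sub_eq_zero]
  obtain ⟨k, hk⟩ := hd
  have hm : m₁ = m₂ + n * k := by linarith
  rw [hm, cE_add, cE_nmul, mul_one]

lemma cE_sum (n : ℕ) {ι : Type*} (s : Finset ι) (g : ι → ℤ) :
    cE n (∑ q ∈ s, g q) = ∏ q ∈ s, cE n (g q) := by
  unfold cE
  rw [← Complex.exp_sum]
  congr 1
  rw [← Finset.sum_div]
  congr 1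
  push_cast
  rw [Finset.mul_sum]

lemma cE_geom (M : ℕ) [NeZero M] (u : ℤ) :
    ∑ j ∈ Finset.range M, cE M (j * u) = if (M : ℤ) ∣ u then (M : ℂ) else 0 := by
  have hM0 : (M : ℂ) ≠ 0 := Nat.cast_ne_zero.mpr (NeZero.ne M)
  have h2 : (2 : ℂ) * Real.pi * Complex.I ≠ 0 := by
    simp [Real.pi_ne_zero, Complex.I_ne_zero, Complex.ofReal_ne_zero]
  set x : ℂ := cE M u with hx
  have hterm : ∀ j : ℕ, cE M (j * u) = x ^ j := by
    intro j
    rw [hx]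
    unfold cE
    rw [← Complex.exp_nat_mul]
    congr 1
    push_cast
    ring
  simp only [hterm]
  have hxM : x ^ M = 1 := by
    rw [hx]; unfold cE
    rw [← Complex.exp_nat_mul]
    have : (M : ℂ) * (2 * Real.pi * Complex.I * u / M) = (u : ℤ) * (2 * Real.pi * Complex.I) := by
      field_simp
    rw [this, Complex.exp_int_mul_two_pi_mul_I]
  have hx1 : x = 1 ↔ (M : ℤ) ∣ u := by
    rw [hx]; unfold cE
    rw [Complex.exp_eq_one_iff]
    constructor
    · rintro ⟨k, hk⟩
      refine ⟨k, ?_⟩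
      have hu : (u : ℂ) = (M : ℂ) * k := by
        field_simp at hk
        have h3 : 2 * (Real.pi : ℂ) * Complex.I * (u : ℂ)
            = 2 * (Real.pi : ℂ) * Complex.I * ((M : ℂ) * k) := by
          rw [hk]
        exact mul_left_cancel₀ h2 h3
      exact_mod_cast hu
    · rintro ⟨k, hk⟩
      refine ⟨k, ?_⟩
      rw [hk]
      push_cast
      field_simp
  by_cases h : (M : ℤ) ∣ u
  · rw [if_pos h, hx1.mpr h]
    simp
  · rw [if_neg h]
    have hxne : x ≠ 1 := fun hc => h (hx1.mp hc)
    rw [geom_sum_eq hxne, hxM]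
    simp

lemma coord_sum (n : ℕ) [NeZero n] (B' : ℕ) [NeZero B'] (hB' : B' ∣ n) (b : ZMod B') (u : ℤ) :
    ∑ z ∈ Finset.univ.filter (fun z : ZMod n => ZMod.castHom hB' (ZMod B') z = b),
      cE n ((z.val : ℤ) * u)
    = if ((n / B' : ℕ) : ℤ) ∣ u then ((n / B' : ℕ) : ℂ) * cE n ((b.val : ℤ) * u) else 0 := by
  have hn : 0 < n := Nat.pos_of_ne_zero (NeZero.ne n)
  have hBpos : 0 < B' := Nat.pos_of_ne_zero (NeZero.ne B')
  set M : ℕ := n / B' with hM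
  have hBM : B' * M = n := Nat.mul_div_cancel' hB'
  have hMpos : 0 < M := Nat.div_pos (Nat.le_of_dvd hn hB') hBpos
  haveI : NeZero M := ⟨hMpos.ne'⟩
  have hbv : b.val < B' := ZMod.val_lt b
  -- the image description of the filter set
  have hset : Finset.univ.filter (fun z : ZMod n => ZMod.castHom hB' (ZMod B') z = b)
      = (Finset.range M).image (fun j => ((b.val + B' * j : ℕ) : ZMod n)) := by
    ext z
    simp only [Finset.mem_filter, Finset.mem_univ, true_and, Finset.mem_image,
      Finset.mem_range]
    constructor
    · intro hz
      refine ⟨z.val / B', ?_, ?_⟩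
      · rw [Nat.div_lt_iff_lt_mul hBpos]
        calc z.val < n := ZMod.val_lt z
        _ = M * B' := by rw [mul_comm]; exact hBM.symm
      · have hb' : b.val = z.val % B' := by
          rw [← hz, ZMod.castHom_apply, ← ZMod.natCast_val, ZMod.val_natCast]
        rw [hb', Nat.mod_add_div]
        simp [ZMod.natCast_val, ZMod.cast_id]
    · rintro ⟨j, hj, rfl⟩
      rw [ZMod.castHom_apply]
      have : (ZMod.cast ((b.val + B' * j : ℕ) : ZMod n) : ZMod B')
          = ((b.val + B' * j : ℕ) : ZMod B') := by
        rw [ZMod.cast_natCast hB']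
      rw [this]
      push_cast
      simp [ZMod.natCast_self, ZMod.natCast_val, ZMod.cast_id]
  rw [hset]
  have hlt : ∀ j < M, b.val + B' * j < n := by
    intro j hj
    calc b.val + B' * j < B' + B' * j := by omega
    _ = B' * (j + 1) := by ring
    _ ≤ B' * M := Nat.mul_le_mul_left _ (by omega)
    _ = n := hBM
  have hinj : ∀ j ∈ Finset.range M, ∀ j' ∈ Finset.range M,
      ((b.val + B' * j : ℕ) : ZMod n) = ((b.val + B' * j' : ℕ) : ZMod n) → j = j' := by
    intro j hj j' hj' h
    rw [Finset.mem_range] at hj hj'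
    have h1 := ZMod.val_cast_of_lt (hlt j hj)
    have h2 := ZMod.val_cast_of_lt (hlt j' hj')
    have : b.val + B' * j = b.val + B' * j' := by rw [← h1, ← h2, h]
    have := Nat.add_left_cancel this
    exact Nat.eq_of_mul_eq_mul_left hBpos this
  rw [Finset.sum_image hinj]
  have hterm : ∀ j ∈ Finset.range M,
      cE n (((((b.val + B' * j : ℕ) : ZMod n)).val : ℤ) * u)
      = cE n ((b.val : ℤ) * u) * cE M ((j : ℤ) * u) := by
    intro j hj
    rw [Finset.mem_range] at hj
    rw [ZMod.val_cast_of_lt (hlt j hj)]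
    have : ((b.val + B' * j : ℕ) : ℤ) * u = (b.val : ℤ) * u + ((B' : ℤ) * j * u) := by
      push_cast; ring
    rw [this, cE_add]
    congr 1
    unfold cE
    congr 1
    have hnC : (n : ℂ) ≠ 0 := Nat.cast_ne_zero.mpr hn.ne'
    have hMC : (M : ℂ) ≠ 0 := Nat.cast_ne_zero.mpr hMpos.ne'
    rw [div_eq_div_iff hnC hMC]
    have : (n : ℂ) = (B' : ℂ) * M := by exact_mod_cast hBM.symm
    rw [this]
    push_cast
    ring
  rw [Finset.sum_congr rfl hterm, ← Finset.mul_sum, cE_geom M u]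
  by_cases h : (M : ℤ) ∣ u
  · rw [if_pos h, if_pos h]; ring
  · rw [if_neg h, if_neg h]; ring

lemma inner_sum9 (n d : ℕ) [NeZero n] (B : Fin d → ℕ) [∀ q, NeZero (B q)] (hB : ∀ q, B q ∣ n)
    (b : ∀ q, ZMod (B q)) (u : Fin d → ℤ) :
    (∑ f ∈ Finset.univ.filter (fun f : Fin d → ZMod n =>
        ∀ q, ZMod.castHom (hB q) (ZMod (B q)) (f q) = b q),
      cE n (∑ q, ((f q).val : ℤ) * u q))
    = if (∀ q, ((n / B q : ℕ) : ℤ) ∣ u q) then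
        (∏ q, ((n / B q : ℕ) : ℂ)) * cE n (∑ q, ((b q).val : ℤ) * u q) else 0 := by
  classical
  have hset : Finset.univ.filter (fun f : Fin d → ZMod n =>
        ∀ q, ZMod.castHom (hB q) (ZMod (B q)) (f q) = b q)
      = Fintype.piFinset (fun q => Finset.univ.filter
          fun z : ZMod n => ZMod.castHom (hB q) (ZMod (B q)) z = b q) := by
    ext f
    simp only [Fintype.mem_piFinset, Finset.mem_filter, Finset.mem_univ, true_and]
  rw [hset]
  rw [Finset.sum_congr rfl fun f _ => cE_sum n Finset.univ (fun q => ((f q).val : ℤ) * u q)]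
  rw [← Finset.prod_univ_sum (fun q => Finset.univ.filter
          fun z : ZMod n => ZMod.castHom (hB q) (ZMod (B q)) z = b q)
        (fun q z => cE n ((z.val : ℤ) * u q))]
  rw [Finset.prod_congr rfl fun q _ => coord_sum n (B q) (hB q) (b q) (u q)]
  by_cases h : ∀ q, ((n / B q : ℕ) : ℤ) ∣ u q
  · rw [if_pos h, Finset.prod_congr rfl (fun q _ => if_pos (h q)),
      Finset.prod_mul_distrib, cE_sum]
  · rw [if_neg h]
    push_neg at h
    obtain ⟨q, hq⟩ := h
    exact Finset.prod_eq_zero (Finset.mem_univ q) (if_neg hq)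

set_option maxHeartbeats 1000000 in
theorem stmt9 (n d : ℕ) [NeZero n] (hn : 0 < n) (hd : 1 ≤ d)
    (B : Fin d → ℕ) [∀ q, NeZero (B q)] (hB : ∀ q, B q ∣ n)
    (a : Fin d → ZMod n) (x : (Fin d → ZMod n) → ℂ)
    (Z : (∀ q, ZMod (B q)) → ℂ)
    (hZ : ∀ t : ∀ q, ZMod (B q),
      Z t = ((n : ℂ) ^ d / ∏ q, ((B q : ℕ) : ℂ)) *
        x ((fun q => (((t q).val * (n / B q) : ℕ) : ZMod n)) + a)) :
    ∀ b : ∀ q, ZMod (B q), dftB d B Z b = bucket n d B hB x a b := by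
  intro b
  classical
  have hnC : (n : ℂ) ≠ 0 := Nat.cast_ne_zero.mpr hn.ne'
  have hBpos : ∀ q, 0 < B q := fun q => Nat.pos_of_ne_zero (NeZero.ne (B q))
  have hBC : ∀ q, ((B q : ℕ) : ℂ) ≠ 0 := fun q => Nat.cast_ne_zero.mpr (hBpos q).ne'
  have hBM : ∀ q, B q * (n / B q) = n := fun q => Nat.mul_div_cancel' (hB q)
  have hMpos : ∀ q, 0 < n / B q := fun q => Nat.div_pos (Nat.le_of_dvd hn (hB q)) (hBpos q)
  have hMn : ∀ q, ((n / B q : ℕ) : ℤ) ∣ (n : ℤ) := fun q =>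
    Int.natCast_dvd_natCast.mpr ⟨B q, by rw [mul_comm]; exact (hBM q).symm⟩
  -- the embedding ι
  set ι : (∀ q, ZMod (B q)) → (Fin d → ZMod n) :=
    fun t => (fun q => (((t q).val * (n / B q) : ℕ) : ZMod n)) + a with hιdef
  have hιq : ∀ t q, ι t q = (((t q).val * (n / B q) : ℕ) : ZMod n) + a q := fun t q => rfl
  have hltM : ∀ q (t0 : ZMod (B q)), t0.val * (n / B q) < n := by
    intro q t0
    calc t0.val * (n / B q) < B q * (n / B q) :=
          (Nat.mul_lt_mul_right (hMpos q)).mpr (ZMod.val_lt t0)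
    _ = n := hBM q
  -- injectivity of ι
  have hι_inj : Function.Injective ι := by
    intro t t' h
    funext q
    have hq := congrFun h q
    rw [hιq, hιq] at hq
    have hq' : (((t q).val * (n / B q) : ℕ) : ZMod n) = (((t' q).val * (n / B q) : ℕ) : ZMod n) :=
      add_right_cancel hq
    have h1 : (t q).val * (n / B q) = (t' q).val * (n / B q) := by
      rw [← ZMod.val_cast_of_lt (hltM q (t q)), ← ZMod.val_cast_of_lt (hltM q (t' q)), hq']
    have h2 : (t q).val = (t' q).val := Nat.eq_of_mul_eq_mul_right (hMpos q) h1
    exact ZMod.val_injective _ h2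
  -- coverage
  have hcov : ∀ s : Fin d → ZMod n,
      (∀ q, ((n / B q : ℕ) : ℤ) ∣ (((a q).val : ℤ) - ((s q).val : ℤ))) → ∃ t, ι t = s := by
    intro s hs
    refine ⟨fun q => (((s q - a q).val / (n / B q) : ℕ) : ZMod (B q)), funext fun q => ?_⟩
    have hd1 : (n : ℤ) ∣ (((s q - a q).val : ℤ) - (((s q).val : ℤ) - ((a q).val : ℤ))) := by
      rw [← ZMod.intCast_zmod_eq_zero_iff_dvd]
      push_cast [ZMod.natCast_val, ZMod.cast_id, ZMod.intCast_cast]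
      ring
    have hd2 : ((n / B q : ℕ) : ℤ) ∣ ((s q - a q).val : ℤ) := by
      have h3 : ((n / B q : ℕ) : ℤ) ∣ (((s q).val : ℤ) - ((a q).val : ℤ)) := by
        have h3' := dvd_neg.mpr (hs q)
        rwa [neg_sub] at h3'
      have h4 := dvd_trans (hMn q) hd1
      have h5 := dvd_add h4 h3
      simpa using h5
    have hd2' : n / B q ∣ (s q - a q).val := Int.ofNat_dvd.mp (by exact_mod_cast hd2)
    have hc : (s q - a q).val / (n / B q) < B q := by
      rw [Nat.div_lt_iff_lt_mul (hMpos q)]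
      calc (s q - a q).val < n := ZMod.val_lt _
      _ = B q * (n / B q) := (hBM q).symm
    have hval : (((s q - a q).val / (n / B q) : ℕ) : ZMod (B q)).val
        = (s q - a q).val / (n / B q) := by
      rw [ZMod.val_natCast, Nat.mod_eq_of_lt hc]
    rw [hιq]
    show (((((s q - a q).val / (n / B q) : ℕ) : ZMod (B q)).val * (n / B q) : ℕ) : ZMod n)
        + a q = s q
    rw [hval, Nat.div_mul_cancel hd2']
    simp [ZMod.natCast_val, ZMod.cast_id]
  -- divisibility at points in the image
  have hdvd_ι : ∀ t q, ((n / B q : ℕ) : ℤ) ∣ (((a q).val : ℤ) - (((ι t) q).val : ℤ)) := by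
    intro t q
    have h1 : (n : ℤ) ∣ ((((a q).val : ℤ) - (((ι t) q).val : ℤ)) -
        (-(((t q).val : ℤ) * ((n / B q : ℕ) : ℤ)))) := by
      rw [← ZMod.intCast_zmod_eq_zero_iff_dvd]
      obtain ⟨m, hm⟩ : ∃ m, m = n / B q := ⟨_, rfl⟩
      simp only [hιq, ← hm]
      push_cast [ZMod.natCast_val, ZMod.cast_id, ZMod.intCast_cast]
      ring
    have h2 : ((n / B q : ℕ) : ℤ) ∣ (-(((t q).val : ℤ) * ((n / B q : ℕ) : ℤ))) :=
      dvd_neg.mpr (Dvd.intro_left _ rfl)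
    have h3 := dvd_add (dvd_trans (hMn q) h1) h2
    simpa using h3
  -- the exponential at points in the image
  have hval_ι : ∀ t : ∀ q, ZMod (B q),
      cE n (∑ q, ((b q).val : ℤ) * (((a q).val : ℤ) - (((ι t) q).val : ℤ)))
      = cE n (-(∑ q, ((b q).val : ℤ) * ((t q).val : ℤ) * ((n / B q : ℕ) : ℤ))) := by
    intro t
    apply cE_mod
    obtain ⟨m, hm⟩ : ∃ m : Fin d → ℕ, m = fun q => n / B q := ⟨_, rfl⟩
    have hm' : ∀ q, n / B q = m q := fun q => by rw [hm]
    simp only [hιq, hm']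
    push_cast [ZMod.natCast_val, ZMod.cast_id, ZMod.intCast_cast]
    rw [← Finset.sum_neg_distrib]
    refine Finset.sum_congr rfl fun q _ => ?_
    ring
  -- Step 1: the LHS
  have hLHS : dftB d B Z b = ∑ t : ∀ q, ZMod (B q), Z t *
      cE n (-(∑ q, ((b q).val : ℤ) * ((t q).val : ℤ) * ((n / B q : ℕ) : ℤ))) := by
    unfold dftB
    refine Finset.sum_congr rfl fun t _ => ?_
    congr 1
    unfold cE
    congr 1
    have hterm : ∀ q ∈ Finset.univ, ((b q).val : ℂ) * ((t q).val : ℂ) / ((B q : ℕ) : ℂ)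
        = ((((b q).val * (t q).val * (n / B q) : ℕ) : ℂ)) / (n : ℂ) := by
      intro q _
      rw [div_eq_div_iff (hBC q) hnC]
      have hn' : (n : ℂ) = ((B q : ℕ) : ℂ) * ((n / B q : ℕ) : ℂ) := by
        exact_mod_cast (hBM q).symm
      rw [hn']
      push_cast
      ring
    rw [Finset.sum_congr rfl hterm, ← Finset.sum_div]
    obtain ⟨m, hm⟩ : ∃ m : Fin d → ℕ, m = fun q => n / B q := ⟨_, rfl⟩
    have hm' : ∀ q, n / B q = m q := fun q => by rw [hm]
    simp only [hm']
    push_cast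
    ring
  -- Step 3: the RHS as a sum over s
  have hRHS : bucket n d B hB x a b = ∑ s : Fin d → ZMod n, x s *
      (if (∀ q, ((n / B q : ℕ) : ℤ) ∣ (((a q).val : ℤ) - ((s q).val : ℤ))) then
        (∏ q, ((n / B q : ℕ) : ℂ)) *
          cE n (∑ q, ((b q).val : ℤ) * (((a q).val : ℤ) - ((s q).val : ℤ))) else 0) := by
    unfold bucket dft
    have h1 : ∀ f : Fin d → ZMod n,
        (∑ s : Fin d → ZMod n, x s * Complex.exp (-(2 * (Real.pi : ℂ) * Complex.I) *
          (((∑ q, f q * s q : ZMod n)).val : ℂ) / (n : ℂ))) *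
          Complex.exp ((2 * (Real.pi : ℂ) * Complex.I) *
            (((∑ q, f q * a q : ZMod n)).val : ℂ) / (n : ℂ))
        = ∑ s : Fin d → ZMod n, x s *
            cE n (∑ q, ((f q).val : ℤ) * (((a q).val : ℤ) - ((s q).val : ℤ))) := by
      intro f
      rw [Finset.sum_mul]
      refine Finset.sum_congr rfl fun s _ => ?_
      rw [mul_assoc]
      congr 1
      have e1 : Complex.exp (-(2 * (Real.pi : ℂ) * Complex.I) *
          (((∑ q, f q * s q : ZMod n)).val : ℂ) / (n : ℂ))
          = cE n (-(((∑ q, f q * s q : ZMod n)).val : ℤ)) := by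
        unfold cE; congr 1; push_cast; ring
      have e2 : Complex.exp ((2 * (Real.pi : ℂ) * Complex.I) *
          (((∑ q, f q * a q : ZMod n)).val : ℂ) / (n : ℂ))
          = cE n ((((∑ q, f q * a q : ZMod n)).val : ℤ)) := by
        unfold cE; norm_cast
      rw [e1, e2, ← cE_add]
      apply cE_mod
      push_cast [ZMod.natCast_val, ZMod.cast_id, ZMod.intCast_cast]
      simp only [mul_sub]
      rw [Finset.sum_sub_distrib]
      ring
    rw [Finset.sum_congr rfl fun f _ => h1 f, Finset.sum_comm]
    refine Finset.sum_congr rfl fun s _ => ?_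
    rw [← Finset.mul_sum, inner_sum9 n d B hB b (fun q => ((a q).val : ℤ) - ((s q).val : ℤ))]
  -- Step 4: reindex the RHS sum through ι and conclude
  rw [hLHS, hRHS]
  set G : (Fin d → ZMod n) → ℂ := fun s => x s *
      (if (∀ q, ((n / B q : ℕ) : ℤ) ∣ (((a q).val : ℤ) - ((s q).val : ℤ))) then
        (∏ q, ((n / B q : ℕ) : ℂ)) *
          cE n (∑ q, ((b q).val : ℤ) * (((a q).val : ℤ) - ((s q).val : ℤ))) else 0) with hG
  have himage : ∑ s ∈ Finset.univ.image ι, G s = ∑ s : Fin d → ZMod n, G s := by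
    apply Finset.sum_subset (Finset.subset_univ _)
    intro s _ hs
    have hnd : ¬ ∀ q, ((n / B q : ℕ) : ℤ) ∣ (((a q).val : ℤ) - ((s q).val : ℤ)) := by
      intro hcon
      obtain ⟨t, ht⟩ := hcov s hcon
      exact hs (Finset.mem_image.mpr ⟨t, Finset.mem_univ t, ht⟩)
    simp only [hG]
    rw [if_neg hnd, mul_zero]
  have hsum2 : ∑ t : ∀ q, ZMod (B q), G (ι t) = ∑ s ∈ Finset.univ.image ι, G s :=
    (Finset.sum_image (fun t _ t' _ h => hι_inj h)).symm
  rw [← himage, ← hsum2]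
  -- final constant computation
  have hprodne : (∏ q, ((B q : ℕ) : ℂ)) ≠ 0 := Finset.prod_ne_zero_iff.mpr fun q _ => hBC q
  have hC : (∏ q, ((n / B q : ℕ) : ℂ)) = (n : ℂ) ^ d / ∏ q, ((B q : ℕ) : ℂ) := by
    rw [eq_div_iff hprodne, ← Finset.prod_mul_distrib]
    calc ∏ q, (((n / B q : ℕ) : ℂ) * ((B q : ℕ) : ℂ))
        = ∏ _q : Fin d, (n : ℂ) := by
          refine Finset.prod_congr rfl fun q _ => ?_
          rw [mul_comm]
          exact_mod_cast congrArg (Nat.cast : ℕ → ℂ) (hBM q)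
      _ = (n : ℂ) ^ d := by simp [Finset.prod_const, Finset.card_univ]
  refine Finset.sum_congr rfl fun t _ => ?_
  simp only [hG]
  rw [if_pos (fun q => hdvd_ι t q), hval_ι t, hZ t]
  have harg : ((fun q => (((t q).val * (n / B q) : ℕ) : ZMod n)) + a) = ι t := rfl
  rw [harg, hC]
  ring
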